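/- Let (X, dist) be a metric space, κ > 0, and let U₋, U₊, V₋, V₊ be pairwise disjoint subsets of X. Let A, B : X → X be bijections such that: A maps X∖U₋ into U₊ and dist(A x, A y) ≤ e^{−κ}·dist(x,y) for all x, y ∈ X∖U₋; A⁻¹ maps X∖U₊ into U₋ and dist(A⁻¹ x, A⁻¹ y) ≤ e^{−κ}·dist(x,y) for all x, y ∈ X∖U₊; B maps X∖V₋ into V₊ and dist(B x, B y) ≤ dist(x,y) for all x, y ∈ X∖V₋; B⁻¹ maps X∖V₊ into V₋ and dist(B⁻¹ x, B⁻¹ y) ≤ dist(x,y) for all x, y ∈ X∖V₊. Let φ : F₂ → Sym(X) be the group homomorphism from the free group on two generators a, b to the group of bijections of X determined by φ(a) = A and φ(b) = B. Then for every γ ∈ F₂ and all x, y ∈ X ∖ (U₋ ∪ U₊ ∪ V₋ ∪ V₊): dist( φ(γ)(x), φ(γ)(y) ) ≤ e^{−κ·ℓ_a(γ)} · dist(x, y). -/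

import Mathlib

/-- The number of letters equal to `a` or `a⁻¹` in the reduced word of an element of the
free group on the two generators `a = FreeGroup.of 0` and `b = FreeGroup.of 1`. -/
def lenA (γ : FreeGroup (Fin 2)) : ℕ :=
  (FreeGroup.toWord γ).countP fun p => decide (p.1 = 0)

lemma chain'_of_noCancel (L : List (Fin 2 × Bool))
    (h : ∀ (L₂ L₃ : List (Fin 2 × Bool)) (x : Fin 2) (b : Bool),
      L ≠ L₂ ++ (x, b) :: (x, !b) :: L₃) :
    List.Chain' (fun p q : Fin 2 × Bool => q ≠ (p.1, !p.2)) L := by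
  induction L with
  | nil => exact List.isChain_nil
  | cons p L ih =>
    rw [List.Chain', List.isChain_cons]
    constructor
    · intro q hq hQ
      cases L with
      | nil => simp at hq
      | cons q' L' =>
        simp only [List.head?_cons, Option.mem_def, Option.some.injEq] at hq
        subst hq
        exact h [] L' p.1 p.2 (by simp [hQ])
    · apply ih
      intro L₂ L₃ x b hL
      exact h (p :: L₂) L₃ x b (by rw [hL]; rfl)

/-- Ping-pong contraction estimate: if `A` contracts by `e^{−κ}` outside `U₋` (and `A⁻¹`
outside `U₊`), and `B` is `1`-Lipschitz outside `V₋` (and `B⁻¹` outside `V₊`), with the four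
sets pairwise disjoint, then the bijection `φ(γ)` associated to a reduced word `γ` of the
free group contracts by `e^{−κ·ℓ_a(γ)}` on the complement of the four sets. -/
theorem stmt16 (X : Type*) [MetricSpace X] (κ : ℝ) (hκ : 0 < κ)
    (Um Up Vm Vp : Set X)
    (hd1 : Disjoint Um Up) (hd2 : Disjoint Um Vm) (hd3 : Disjoint Um Vp)
    (hd4 : Disjoint Up Vm) (hd5 : Disjoint Up Vp) (hd6 : Disjoint Vm Vp)
    (A B : Equiv.Perm X)
    (hA1 : ∀ x ∉ Um, A x ∈ Up)
    (hA2 : ∀ x ∉ Um, ∀ y ∉ Um, dist (A x) (A y) ≤ Real.exp (-κ) * dist x y)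
    (hA3 : ∀ x ∉ Up, A⁻¹ x ∈ Um)
    (hA4 : ∀ x ∉ Up, ∀ y ∉ Up, dist (A⁻¹ x) (A⁻¹ y) ≤ Real.exp (-κ) * dist x y)
    (hB1 : ∀ x ∉ Vm, B x ∈ Vp)
    (hB2 : ∀ x ∉ Vm, ∀ y ∉ Vm, dist (B x) (B y) ≤ dist x y)
    (hB3 : ∀ x ∉ Vp, B⁻¹ x ∈ Vm)
    (hB4 : ∀ x ∉ Vp, ∀ y ∉ Vp, dist (B⁻¹ x) (B⁻¹ y) ≤ dist x y)
    (φ : FreeGroup (Fin 2) →* Equiv.Perm X)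
    (hφ : φ = FreeGroup.lift fun i : Fin 2 => if i = 0 then A else B) :
    ∀ γ : FreeGroup (Fin 2), ∀ x ∉ Um ∪ Up ∪ Vm ∪ Vp, ∀ y ∉ Um ∪ Up ∪ Vm ∪ Vp,
      dist (φ γ x) (φ γ y) ≤ Real.exp (-(κ * (lenA γ : ℝ))) * dist x y := by
  -- target set of each letter
  set tgt : Fin 2 × Bool → Set X := fun p =>
    if p.1 = 0 then (if p.2 then Up else Um) else (if p.2 then Vp else Vm) with htgt
  -- permutation of each letter
  set g : Fin 2 × Bool → Equiv.Perm X := fun p =>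
    if p.2 then (if p.1 = 0 then A else B) else (if p.1 = 0 then A else B)⁻¹ with hg
  have hUnion : ∀ p, tgt p ⊆ Um ∪ Up ∪ Vm ∪ Vp := by
    rintro ⟨i, s⟩ z hz
    fin_cases i <;> cases s <;> simp [htgt] at hz <;>
      simp [Set.mem_union, hz]
  have hmap : ∀ p, ∀ x ∉ tgt (p.1, !p.2), g p x ∈ tgt p := by
    rintro ⟨i, s⟩ x hx
    fin_cases i <;> cases s <;> simp [htgt, hg] at hx ⊢
    · exact hA3 x hx
    · exact hA1 x hx
    · exact hB3 x hx
    · exact hB1 x hx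
  have hcon : ∀ p, ∀ x ∉ tgt (p.1, !p.2), ∀ y ∉ tgt (p.1, !p.2),
      dist (g p x) (g p y) ≤ (if p.1 = 0 then Real.exp (-κ) else 1) * dist x y := by
    rintro ⟨i, s⟩ x hx y hy
    fin_cases i <;> cases s <;> simp [htgt, hg] at hx hy ⊢
    · exact hA4 x hx y hy
    · exact hA2 x hx y hy
    · exact hB4 x hx y hy
    · exact hB2 x hx y hy
  have hdisj : ∀ p q : Fin 2 × Bool, p ≠ q → Disjoint (tgt p) (tgt q) := by
    rintro ⟨i, s⟩ ⟨j, t⟩ hpq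
    have hne : ¬(i = j ∧ s = t) := by rintro ⟨rfl, rfl⟩; exact hpq rfl
    fin_cases i <;> fin_cases j <;> cases s <;> cases t <;>
      norm_num [htgt] <;> norm_num at hne <;>
      first
        | exact hd1 | exact hd1.symm | exact hd2 | exact hd2.symm
        | exact hd3 | exact hd3.symm | exact hd4 | exact hd4.symm
        | exact hd5 | exact hd5.symm | exact hd6 | exact hd6.symm
  have hsplit : ∀ (p : Fin 2 × Bool) (L : List (Fin 2 × Bool)),
      φ (FreeGroup.mk (p :: L)) = g p * φ (FreeGroup.mk L) := by
    rintro ⟨i, s⟩ L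
    have h1 : FreeGroup.mk ((i, s) :: L) = FreeGroup.mk [(i, s)] * FreeGroup.mk L := by
      rw [FreeGroup.mul_mk]; rfl
    rw [h1, map_mul]
    congr 1
    cases s
    · have : FreeGroup.mk [(i, false)] = (FreeGroup.of i)⁻¹ := by
        rw [FreeGroup.of, FreeGroup.inv_mk]; rfl
      rw [this, map_inv, hφ, FreeGroup.lift_apply_of, hg]
      simp
    · have : FreeGroup.mk [(i, true)] = FreeGroup.of i := rfl
      rw [this, hφ, FreeGroup.lift_apply_of, hg]
      simp
  -- the main induction over reduced words
  have main : ∀ L : List (Fin 2 × Bool),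
      List.Chain' (fun p q : Fin 2 × Bool => q ≠ (p.1, !p.2)) L →
      ∀ x ∉ Um ∪ Up ∪ Vm ∪ Vp, ∀ y ∉ Um ∪ Up ∪ Vm ∪ Vp,
      dist (φ (FreeGroup.mk L) x) (φ (FreeGroup.mk L) y) ≤
        Real.exp (-(κ * ((L.countP fun p => decide (p.1 = 0)) : ℝ))) * dist x y ∧
      ∀ h : L ≠ [], φ (FreeGroup.mk L) x ∈ tgt (L.head h) ∧
        φ (FreeGroup.mk L) y ∈ tgt (L.head h) := by
    intro L
    induction L with
    | nil =>
      intro _ x hx y hy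
      refine ⟨?_, fun h => absurd rfl h⟩
      have : FreeGroup.mk ([] : List (Fin 2 × Bool)) = 1 := rfl
      simp [this]
    | cons p L ih =>
      intro hch x hx y hy
      rw [List.Chain', List.isChain_cons] at hch
      obtain ⟨hhead, htail⟩ := hch
      obtain ⟨ihd, ihm⟩ := ih htail x hx y hy
      set u := φ (FreeGroup.mk L) x with hu
      set v := φ (FreeGroup.mk L) y with hv
      have hu' : u ∉ tgt (p.1, !p.2) ∧ v ∉ tgt (p.1, !p.2) := by
        cases L with
        | nil =>
          have h1 : u = x := by rw [hu, ← FreeGroup.one_eq_mk, map_one]; rfl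
          have h2 : v = y := by rw [hv, ← FreeGroup.one_eq_mk, map_one]; rfl
          rw [h1, h2]
          exact ⟨fun h => hx (hUnion _ h), fun h => hy (hUnion _ h)⟩
        | cons q L' =>
          obtain ⟨hqu, hqv⟩ := ihm (by simp)
          have hq : q ≠ (p.1, !p.2) := hhead q (by simp)
          have hd := hdisj q (p.1, !p.2) hq
          exact ⟨fun h => (hd.ne_of_mem hqu h) rfl, fun h => (hd.ne_of_mem hqv h) rfl⟩
      have happ : φ (FreeGroup.mk (p :: L)) x = g p u ∧
          φ (FreeGroup.mk (p :: L)) y = g p v := by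
        rw [hsplit p L]; exact ⟨rfl, rfl⟩
      refine ⟨?_, fun _ => ?_⟩
      · rw [happ.1, happ.2]
        calc dist (g p u) (g p v) ≤ (if p.1 = 0 then Real.exp (-κ) else 1) * dist u v :=
              hcon p u hu'.1 v hu'.2
          _ ≤ (if p.1 = 0 then Real.exp (-κ) else 1) *
              (Real.exp (-(κ * ((L.countP fun p => decide (p.1 = 0)) : ℝ))) * dist x y) := by
              apply mul_le_mul_of_nonneg_left ihd
              split <;> positivity
          _ = Real.exp (-(κ * (((p :: L).countP fun p => decide (p.1 = 0)) : ℝ))) *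
              dist x y := by
              rw [List.countP_cons]
              rcases eq_or_ne p.1 0 with h0 | h0
              · have hdec : (decide (p.1 = 0)) = true := by simp [h0]
                rw [if_pos h0]
                simp only [hdec, if_true]
                push_cast
                rw [← mul_assoc, ← Real.exp_add]
                ring_nf
              · have hdec : (decide (p.1 = 0)) = false := by simp [h0]
                rw [if_neg h0, one_mul]
                simp only [hdec, if_false]
                norm_num
      · rw [List.head_cons, happ.1, happ.2]
        exact ⟨hmap p u hu'.1, hmap p v hu'.2⟩
  intro γ x hx y hy
  have hred : List.Chain' (fun p q : Fin 2 × Bool => q ≠ (p.1, !p.2)) γ.toWord := by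
    apply chain'_of_noCancel
    intro L₂ L₃ a b hL
    rw [← FreeGroup.reduce_toWord γ] at hL
    exact FreeGroup.reduce.not hL
  have := (main γ.toWord hred x hx y hy).1
  rwa [FreeGroup.mk_toWord] at this
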